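/- Let L : ℝ^d → ℝ be twice continuously differentiable and γ-strongly convex (γ > 0), with Hessian M-Lipschitz in operator norm (‖∇²L(θ) − ∇²L(θ')‖_op ≤ M‖θ − θ'‖ for all θ, θ'), and let θ̂ be the global minimizer of L. For τ ≥ 0 define the quadratic version space Q_τ = {θ : ∇L(θ̂)ᵀ(θ − θ̂) + ½(θ − θ̂)ᵀ∇²L(θ̂)(θ − θ̂) ≤ τ} and the sublevel set ℒ_τ = {θ : L(θ) − L(θ̂) ≤ τ}, and set ζ = M(2τ/γ)^{3/2}. Then ℒ_τ ⊆ Q_{τ+ζ} and Q_τ ⊆ ℒ_{τ+ζ}. -/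

import Mathlib

open scoped RealInnerProductSpace
open Set

section aux
variable {d : ℕ}

local notation "E" => EuclideanSpace ℝ (Fin d)

noncomputable def stmt13DualEquiv :
    StrongDual ℝ (EuclideanSpace ℝ (Fin d)) →L[ℝ] EuclideanSpace ℝ (Fin d) :=
  { toFun := fun y => (InnerProductSpace.toDual ℝ (EuclideanSpace ℝ (Fin d))).symm y,
    map_add' := fun a b => map_add _ a b,
    map_smul' := fun c a => by
      simpa [starRingEnd_apply] using
        (InnerProductSpace.toDual ℝ (EuclideanSpace ℝ (Fin d))).symm.map_smulₛₗ c a,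
    cont := (InnerProductSpace.toDual ℝ (EuclideanSpace ℝ (Fin d))).symm.continuous }

lemma stmt13_inner_gradient_eq (L : E → ℝ) (z v : E) :
    ⟪gradient L z, v⟫ = fderiv ℝ L z v := by
  rw [gradient, InnerProductSpace.toDual_symm_apply]

lemma stmt13_grad_diff (L : E → ℝ) (hL : ContDiff ℝ 2 L) :
    Differentiable ℝ (gradient L) := by
  have h1 : ContDiff ℝ 1 (fderiv ℝ L) := hL.fderiv_right (by norm_num)
  have heq : gradient L = fun x => (stmt13DualEquiv (d := d)) (fderiv ℝ L x) := rfl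
  rw [heq]
  exact (ContinuousLinearMap.differentiable _).comp (h1.differentiable one_ne_zero)

/-- Level-1 mean value bound: `‖g y - g x - A (y - x)‖ ≤ M ‖y-x‖²`. -/
lemma stmt13_mvt1 (L : E → ℝ) (hL : ContDiff ℝ 2 L) {M : ℝ} (hM : 0 ≤ M)
    (hlip : ∀ θ θ' : E, ‖fderiv ℝ (gradient L) θ - fderiv ℝ (gradient L) θ'‖ ≤ M * ‖θ - θ'‖)
    (x y : E) :
    ‖gradient L y - gradient L x - fderiv ℝ (gradient L) x (y - x)‖ ≤ M * ‖y - x‖ * ‖y - x‖ := by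
  have hgd := stmt13_grad_diff L hL
  refine (convex_segment x y).norm_image_sub_le_of_norm_fderiv_le'
    (fun z _ => hgd z) (fun z hz => ?_) (left_mem_segment ℝ x y) (right_mem_segment ℝ x y)
  obtain ⟨a, b, ha, hb, hab, rfl⟩ := hz
  have hz : a • x + b • y - x = b • (y - x) := by
    have : a = 1 - b := by linarith
    rw [this]; module
  calc ‖fderiv ℝ (gradient L) (a • x + b • y) - fderiv ℝ (gradient L) x‖
      ≤ M * ‖a • x + b • y - x‖ := hlip _ _
    _ ≤ M * ‖y - x‖ := by
        gcongr
        rw [hz, norm_smul, Real.norm_eq_abs, abs_of_nonneg hb]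
        nlinarith [norm_nonneg (y - x)]

/-- Second-order Taylor remainder bound. -/
lemma stmt13_taylor2 (L : E → ℝ) (hL : ContDiff ℝ 2 L) {M : ℝ} (hM : 0 ≤ M)
    (hlip : ∀ θ θ' : E, ‖fderiv ℝ (gradient L) θ - fderiv ℝ (gradient L) θ'‖ ≤ M * ‖θ - θ'‖)
    (x y : E) :
    |L y - L x - ⟪gradient L x, y - x⟫
      - 1 / 2 * ⟪fderiv ℝ (gradient L) x (y - x), y - x⟫| ≤ M * ‖y - x‖ ^ 3 := by
  set h : E := y - x with hh
  set A := fderiv ℝ (gradient L) x with hA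
  set c₁ : ℝ := ⟪gradient L x, h⟫ with hc₁
  set c₂ : ℝ := ⟪A h, h⟫ with hc₂
  have hLd : Differentiable ℝ L := hL.differentiable (by norm_num)
  set f : ℝ → ℝ := fun t => L (x + t • h) - t * c₁ - t ^ 2 / 2 * c₂ with hf
  set f' : ℝ → ℝ := fun t => ⟪gradient L (x + t • h) - gradient L x - A (t • h), h⟫ with hf'
  have hderiv : ∀ t : ℝ, HasDerivAt f (f' t) t := by
    intro t
    have h1 : HasDerivAt (fun t : ℝ => x + t • h) h t := by
      simpa using ((hasDerivAt_id t).smul_const h).const_add x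
    have h2 : HasDerivAt (fun t : ℝ => L (x + t • h)) (fderiv ℝ L (x + t • h) h) t :=
      (hLd (x + t • h)).hasFDerivAt.comp_hasDerivAt t h1
    have h3 : HasDerivAt f (fderiv ℝ L (x + t • h) h - c₁ - t * c₂) t := by
      have h4 : HasDerivAt (fun t : ℝ => t * c₁) c₁ t := by
        simpa using (hasDerivAt_id t).mul_const c₁
      have h5 : HasDerivAt (fun t : ℝ => t ^ 2 / 2 * c₂) (t * c₂) t := by
        have h5' := ((hasDerivAt_pow 2 t).div_const 2).mul_const c₂
        refine h5'.congr_deriv ?_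
        push_cast
        ring
      exact (h2.sub h4).sub h5
    have heq : f' t = fderiv ℝ L (x + t • h) h - c₁ - t * c₂ := by
      simp only [hf']
      rw [inner_sub_left, inner_sub_left, ← hc₁, stmt13_inner_gradient_eq, map_smul,
        real_inner_smul_left, ← hc₂]
    rw [heq]
    exact h3
  have hbound : ∀ t ∈ Ico (0 : ℝ) 1, ‖f' t‖ ≤ M * ‖h‖ ^ 3 := by
    intro t ht
    have hm := stmt13_mvt1 L hL hM hlip x (x + t • h)
    rw [add_sub_cancel_left, ← hA] at hm
    have h6 : |f' t| ≤ ‖gradient L (x + t • h) - gradient L x - A (t • h)‖ * ‖h‖ :=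
      abs_real_inner_le_norm _ _
    have h7 : ‖t • h‖ = t * ‖h‖ := by
      rw [norm_smul, Real.norm_eq_abs, abs_of_nonneg ht.1]
    have h8 : ‖gradient L (x + t • h) - gradient L x - A (t • h)‖ ≤ M * ‖h‖ * ‖h‖ := by
      refine hm.trans ?_
      rw [h7]
      have htn : t * ‖h‖ ≤ ‖h‖ := by nlinarith [norm_nonneg h, ht.1, ht.2.le]
      have h0 : 0 ≤ t * ‖h‖ := mul_nonneg ht.1 (norm_nonneg h)
      nlinarith [mul_le_mul (mul_le_mul_of_nonneg_left htn hM) htn h0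
        (mul_nonneg hM (norm_nonneg h))]
    rw [Real.norm_eq_abs]
    calc |f' t| ≤ M * ‖h‖ * ‖h‖ * ‖h‖ := h6.trans (by nlinarith [norm_nonneg h])
      _ = M * ‖h‖ ^ 3 := by ring
  have key : ‖f 1 - f 0‖ ≤ M * ‖h‖ ^ 3 :=
    norm_image_sub_le_of_norm_deriv_le_segment_01'
      (fun t _ => (hderiv t).hasDerivWithinAt) hbound
  have hf1 : f 1 = L y - c₁ - 1 / 2 * c₂ := by
    have hxy : x + (1 : ℝ) • h = y := by rw [one_smul, hh]; abel
    simp only [hf, hxy, one_pow, one_mul]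
  have hf0 : f 0 = L x := by simp [hf]
  rw [hf1, hf0, Real.norm_eq_abs] at key
  convert key using 2
  ring
end aux

/-- part of Lemma 6 of the supplement: for a twice continuously
differentiable, `γ`-strongly convex `L : ℝ^d → ℝ` whose Hessian is
`M`-Lipschitz in operator norm, with global minimizer `θ̂`, the sublevel set
`ℒ_τ` of `L − L(θ̂)` and the sublevel set `Q_τ` of the second-order Taylor
expansion of `L` at `θ̂` satisfy `ℒ_τ ⊆ Q_{τ+ζ}` and `Q_τ ⊆ ℒ_{τ+ζ}` where
`ζ = M (2τ/γ)^{3/2}`. -/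
theorem stmt13 {d : ℕ}
    (L : EuclideanSpace ℝ (Fin d) → ℝ) (hL : ContDiff ℝ 2 L)
    (γ M : ℝ) (hγ : 0 < γ) (hM : 0 ≤ M)
    (hsc : ∀ θ θ' : EuclideanSpace ℝ (Fin d),
      L θ + ⟪gradient L θ, θ' - θ⟫ + γ / 2 * ‖θ' - θ‖ ^ 2 ≤ L θ')
    (hlip : ∀ θ θ' : EuclideanSpace ℝ (Fin d),
      ‖fderiv ℝ (gradient L) θ - fderiv ℝ (gradient L) θ'‖ ≤ M * ‖θ - θ'‖)
    (θhat : EuclideanSpace ℝ (Fin d)) (hmin : ∀ θ, L θhat ≤ L θ)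
    (τ : ℝ) (hτ : 0 ≤ τ) :
    {θ : EuclideanSpace ℝ (Fin d) | L θ - L θhat ≤ τ} ⊆
      {θ : EuclideanSpace ℝ (Fin d) |
        ⟪gradient L θhat, θ - θhat⟫
          + 1 / 2 * ⟪fderiv ℝ (gradient L) θhat (θ - θhat), θ - θhat⟫
          ≤ τ + M * (2 * τ / γ) ^ ((3 : ℝ) / 2)}
    ∧ {θ : EuclideanSpace ℝ (Fin d) |
        ⟪gradient L θhat, θ - θhat⟫
          + 1 / 2 * ⟪fderiv ℝ (gradient L) θhat (θ - θhat), θ - θhat⟫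
          ≤ τ} ⊆
      {θ : EuclideanSpace ℝ (Fin d) |
        L θ - L θhat ≤ τ + M * (2 * τ / γ) ^ ((3 : ℝ) / 2)} := by
  set A := fderiv ℝ (gradient L) θhat with hA
  have hg0 : gradient L θhat = 0 := by
    have hloc : IsLocalMin L θhat := Filter.Eventually.of_forall hmin
    rw [gradient, hloc.fderiv_eq_zero, map_zero]
  have hcube : ∀ θ : EuclideanSpace ℝ (Fin d), ‖θ - θhat‖ ^ 2 ≤ 2 * τ / γ →
      M * ‖θ - θhat‖ ^ 3 ≤ M * (2 * τ / γ) ^ ((3 : ℝ) / 2) := by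
    intro θ hsq
    have h1 : ‖θ - θhat‖ ^ 3 = (‖θ - θhat‖ ^ 2 : ℝ) ^ ((3 : ℝ) / 2) := by
      rw [← Real.rpow_natCast ‖θ - θhat‖ 2, ← Real.rpow_mul (norm_nonneg _),
        ← Real.rpow_natCast ‖θ - θhat‖ 3]
      norm_num
    rw [h1]
    gcongr

  have htay : ∀ θ : EuclideanSpace ℝ (Fin d),
      |L θ - L θhat - ⟪gradient L θhat, θ - θhat⟫ - 1 / 2 * ⟪A (θ - θhat), θ - θhat⟫|
        ≤ M * ‖θ - θhat‖ ^ 3 := fun θ => by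
    simpa only [← hA] using stmt13_taylor2 L hL hM hlip θhat θ
  constructor
  · intro θ (hθ : L θ - L θhat ≤ τ)
    have hsq : ‖θ - θhat‖ ^ 2 ≤ 2 * τ / γ := by
      have := hsc θhat θ
      rw [hg0] at this
      simp only [inner_zero_left] at this
      rw [le_div_iff₀ hγ]
      nlinarith
    have h1 := (abs_le.mp (htay θ)).1
    have h2 := hcube θ hsq
    simp only [Set.mem_setOf_eq]
    linarith
  · intro θ (hθ : ⟪gradient L θhat, θ - θhat⟫ + 1 / 2 * ⟪A (θ - θhat), θ - θhat⟫ ≤ τ)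
    rw [hg0] at hθ
    simp only [inner_zero_left, zero_add] at hθ
    have hco : ∀ h : EuclideanSpace ℝ (Fin d), γ * ‖h‖ ^ 2 ≤ ⟪A h, h⟫ := by
      intro h
      rcases eq_or_ne h 0 with rfl | hne
      · simp
      have hn : 0 < ‖h‖ := norm_pos_iff.mpr hne
      have key : ∀ t : ℝ, 0 < t → t ≤ 1 → γ * ‖h‖ ^ 2 ≤ ⟪A h, h⟫ + M * t * ‖h‖ ^ 3 := by
        intro t ht ht1
        have h1 := hsc θhat (θhat + t • h)
        have h2 := hsc (θhat + t • h) θhat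
        rw [hg0] at h1
        simp only [inner_zero_left, add_sub_cancel_left] at h1
        have hsub : θhat - (θhat + t • h) = -(t • h) := by abel
        rw [hsub] at h2
        have hmono : γ * ‖t • h‖ ^ 2 ≤ ⟪gradient L (θhat + t • h), t • h⟫ := by
          rw [inner_neg_right, norm_neg] at h2
          nlinarith
        have hm := stmt13_mvt1 L hL hM hlip θhat (θhat + t • h)
        rw [add_sub_cancel_left, ← hA, hg0, sub_zero] at hm
        have h7 : ‖t • h‖ = t * ‖h‖ := by
          rw [norm_smul, Real.norm_eq_abs, abs_of_nonneg ht.le]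
        have h8 : ⟪A (t • h), t • h⟫ ≥ ⟪gradient L (θhat + t • h), t • h⟫
            - ‖gradient L (θhat + t • h) - A (t • h)‖ * ‖t • h‖ := by
          have habs := abs_real_inner_le_norm
            (gradient L (θhat + t • h) - A (t • h)) (t • h)
          rw [inner_sub_left] at habs
          have := (abs_le.mp habs).2
          linarith
        have h9 : ⟪A (t • h), t • h⟫ = t ^ 2 * ⟪A h, h⟫ := by
          rw [map_smul, real_inner_smul_left, real_inner_smul_right]
          ring
        have h10 : γ * ‖t • h‖ ^ 2 = t ^ 2 * (γ * ‖h‖ ^ 2) := by rw [h7]; ring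
        have h11 : t ^ 2 * (γ * ‖h‖ ^ 2) ≤ t ^ 2 * ⟪A h, h⟫ + M * t ^ 3 * ‖h‖ ^ 3 := by
          rw [← h9, ← h10]
          have hbnd : ‖gradient L (θhat + t • h) - A (t • h)‖ * ‖t • h‖
              ≤ M * t ^ 3 * ‖h‖ ^ 3 := by
            calc _ ≤ (M * ‖t • h‖ * ‖t • h‖) * ‖t • h‖ := by
                    have := norm_nonneg (t • h); nlinarith
              _ = M * t ^ 3 * ‖h‖ ^ 3 := by rw [h7]; ring
          linarith
        have ht2 : 0 < t ^ 2 := by positivity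
        refine (mul_le_mul_iff_right₀ ht2).mp ?_
        calc t ^ 2 * (γ * ‖h‖ ^ 2) ≤ t ^ 2 * ⟪A h, h⟫ + M * t ^ 3 * ‖h‖ ^ 3 := h11
          _ = t ^ 2 * (⟪A h, h⟫ + M * t * ‖h‖ ^ 3) := by ring
      refine le_of_forall_pos_le_add fun ε hε => ?_
      set t : ℝ := min 1 (ε / (M * ‖h‖ ^ 3 + 1)) with htdef
      have htpos : 0 < t := lt_min zero_lt_one (by positivity)
      have ht1 : t ≤ 1 := min_le_left _ _
      have hkey := key t htpos ht1
      have hMt : M * t * ‖h‖ ^ 3 ≤ ε := by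
        have h1 : t ≤ ε / (M * ‖h‖ ^ 3 + 1) := min_le_right _ _
        have h2 : (0:ℝ) < M * ‖h‖ ^ 3 + 1 := by positivity
        have h3 : (0:ℝ) ≤ M * ‖h‖ ^ 3 := by positivity
        calc M * t * ‖h‖ ^ 3 = t * (M * ‖h‖ ^ 3) := by ring
          _ ≤ (ε / (M * ‖h‖ ^ 3 + 1)) * (M * ‖h‖ ^ 3 + 1) :=
              mul_le_mul h1 (by linarith) h3 (by positivity)
          _ = ε := div_mul_cancel₀ ε (ne_of_gt h2)
      linarith
    have hsq : ‖θ - θhat‖ ^ 2 ≤ 2 * τ / γ := by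
      have := hco (θ - θhat)
      rw [le_div_iff₀ hγ]
      nlinarith
    have h1 := (abs_le.mp (htay θ)).2
    have h2 := hcube θ hsq
    simp only [Set.mem_setOf_eq]
    rw [hg0] at h1
    simp only [inner_zero_left] at h1
    linarith
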